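/- Key counting step of the transversal lower bound: for integers k ≥ 2, t ≥ 2, D ≥ 4 with D < kΔ/(16 ln D) and p = Δ/(2Dt), one has exp(−p·k²·t(t−1)/2) ≤ D^{−2kt}; consequently (number of candidate transversal sets)·(prob. a fixed one is independent) ≤ C(D,k)^t · D^{−2kt} < D^{kt}·D^{−2kt} = D^{−kt}. -/

import Mathlib

lemma choose_lt_pow_of_two_le (D k : ℕ) (hk : 2 ≤ k) (hD : 1 ≤ D) :
    D.choose k < D ^ k := by
  have h1 : 2 * D.choose k ≤ k.factorial * D.choose k :=
    Nat.mul_le_mul_right _ (le_trans (by norm_num) (Nat.factorial_le hk))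
  have h2 : k.factorial * D.choose k ≤ D ^ k := by
    rw [← Nat.descFactorial_eq_factorial_mul_choose]
    exact Nat.descFactorial_le_pow D k
  have hpos : 0 < D ^ k := Nat.pow_pos hD
  omega

/-- Key counting step of the transversal lower bound, with `p = Δ/(2Dt)`:
(i) `(1−p)^{C(t,2)·k²} ≤ exp(−p·k²·t(t−1)/2)`;
(ii) `exp(−p·k²·t(t−1)/2) ≤ D^{−2kt}`;
(iii) `C(D,k)^t · D^{−2kt} < D^{−kt}`. -/
theorem stmt15 (k t D : ℕ) (Δ : ℝ) (hk : 2 ≤ k) (ht : 2 ≤ t) (hD4 : 4 ≤ D)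
    (hD : (D : ℝ) < (k : ℝ) * Δ / (16 * Real.log D))
    (hp1 : Δ / (2 * D * t) ≤ 1) :
    (1 - Δ / (2 * D * t)) ^ (Nat.choose t 2 * k ^ 2)
        ≤ Real.exp (-(Δ / (2 * D * t)) * (k : ℝ) ^ 2 * ((t : ℝ) * ((t : ℝ) - 1)) / 2) ∧
    Real.exp (-(Δ / (2 * D * t)) * (k : ℝ) ^ 2 * ((t : ℝ) * ((t : ℝ) - 1)) / 2)
        ≤ (D : ℝ) ^ (-(2 * (k : ℝ) * t)) ∧
    ((D.choose k : ℝ)) ^ t * (D : ℝ) ^ (-(2 * (k : ℝ) * t))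
        < (D : ℝ) ^ (-((k : ℝ) * t)) := by
  set p : ℝ := Δ / (2 * D * t) with hp
  have hDpos : (0:ℝ) < D := by positivity
  have htpos : (0:ℝ) < t := by positivity
  have hkpos : (0:ℝ) < k := by positivity
  have ht1 : (1:ℝ) ≤ (t:ℝ) - 1 := by
    have : (2:ℝ) ≤ t := by exact_mod_cast ht
    linarith
  have hlogD : 0 < Real.log D := Real.log_pos (by exact_mod_cast (by omega : 1 < D))
  -- part (i)
  have part1 : (1 - p) ^ (Nat.choose t 2 * k ^ 2)
      ≤ Real.exp (-p * (k : ℝ) ^ 2 * ((t : ℝ) * ((t : ℝ) - 1)) / 2) := by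
    have hbase : (0:ℝ) ≤ 1 - p := by linarith
    have h1 : 1 - p ≤ Real.exp (-p) := by
      have := Real.add_one_le_exp (-p); linarith
    calc (1 - p) ^ (Nat.choose t 2 * k ^ 2)
        ≤ Real.exp (-p) ^ (Nat.choose t 2 * k ^ 2) :=
          pow_le_pow_left₀ hbase h1 _
      _ = Real.exp (-p * (k : ℝ) ^ 2 * ((t : ℝ) * ((t : ℝ) - 1)) / 2) := by
          rw [← Real.exp_nat_mul]; congr 1
          push_cast [Nat.cast_choose_two]
          ring
  refine ⟨part1, ?_, ?_⟩
  -- the key inequality: p * k^2 * t(t-1)/2 ≥ 2kt log D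
  have hkey : 2 * (k:ℝ) * t * Real.log D ≤ p * (k : ℝ) ^ 2 * ((t : ℝ) * ((t : ℝ) - 1)) / 2 := by
    have hΔ : 16 * (D:ℝ) * Real.log D < (k:ℝ) * Δ := by
      rw [lt_div_iff₀ (show (0:ℝ) < 16 * Real.log D by positivity)] at hD
      nlinarith
    have hpval : p * (k : ℝ) ^ 2 * ((t : ℝ) * ((t : ℝ) - 1)) / 2
        = ((k:ℝ) * Δ) * ((k:ℝ) * ((t:ℝ) - 1)) / (4 * D) := by
      rw [hp]; field_simp; ring
    rw [hpval]
    have h4 : 4 * (k:ℝ) * ((t:ℝ)-1) * Real.log D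
        ≤ ((k:ℝ) * Δ) * ((k:ℝ) * ((t:ℝ) - 1)) / (4 * D) := by
      rw [le_div_iff₀ (by positivity)]
      have hk2 : (2:ℝ) ≤ k := by exact_mod_cast hk
      have hpos2 : (0:ℝ) ≤ (k:ℝ) * ((t:ℝ) - 1) := by nlinarith
      have hm := mul_le_mul_of_nonneg_right hΔ.le hpos2
      nlinarith [hm]
    have h5 : 2 * (k:ℝ) * t * Real.log D ≤ 4 * (k:ℝ) * ((t:ℝ)-1) * Real.log D := by
      have htr : (2:ℝ) ≤ t := by exact_mod_cast ht
      nlinarith [mul_nonneg (mul_nonneg (show (0:ℝ) ≤ (t:ℝ) - 2 by linarith) hkpos.le) hlogD.le]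
    linarith
  · -- part (ii)
    rw [Real.rpow_def_of_pos hDpos, Real.exp_le_exp]
    nlinarith [hkey]
  -- part (iii)
  have hcc : (D.choose k : ℝ) ^ t < ((D:ℝ) ^ k) ^ t := by
    have h := choose_lt_pow_of_two_le D k hk (by omega)
    have : (D.choose k : ℝ) < (D:ℝ) ^ k := by exact_mod_cast h
    exact pow_lt_pow_left₀ this (by positivity) (by omega)
  have hpow : ((D:ℝ) ^ k) ^ t * (D : ℝ) ^ (-(2 * (k : ℝ) * t)) = (D : ℝ) ^ (-((k : ℝ) * t)) := by
    rw [← pow_mul, ← Real.rpow_natCast (D:ℝ) (k*t), ← Real.rpow_add hDpos]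
    congr 1
    push_cast
    ring
  calc (D.choose k : ℝ) ^ t * (D : ℝ) ^ (-(2 * (k : ℝ) * t))
      < ((D:ℝ) ^ k) ^ t * (D : ℝ) ^ (-(2 * (k : ℝ) * t)) := by
        exact mul_lt_mul_of_pos_right hcc (Real.rpow_pos_of_pos hDpos _)
    _ = (D : ℝ) ^ (-((k : ℝ) * t)) := hpow
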